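/- Let G be a topological group and let C be a nonempty family of subgroups of G that is totally ordered by inclusion, such that every K ∈ C, equipped with the subspace topology, is extremely amenable. Then the union ⋃C (which is a subgroup of G), equipped with the subspace topology, is extremely amenable. -/

import Mathlib

/-- A topological group `G` is *extremely amenable* if every continuous action of `G`
on a nonempty compact Hausdorff space has a `G`-fixed point. -/
def ExtremelyAmenable (G : Type) [Group G] [TopologicalSpace G] : Prop :=
  ∀ (X : Type) [TopologicalSpace X] [CompactSpace X] [T2Space X] [Nonempty X]
    [MulAction G X] [ContinuousSMul G X], ∃ x : X, ∀ g : G, g • x = x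

/-- The pair `(G, H)` is *relatively extremely amenable* if every continuous action of `G`
on a nonempty compact Hausdorff space has a point fixed by every element of `H`. -/
def RelativelyExtremelyAmenable (G : Type) [Group G] [TopologicalSpace G] (H : Subgroup G) :
    Prop :=
  ∀ (X : Type) [TopologicalSpace X] [CompactSpace X] [T2Space X] [Nonempty X]
    [MulAction G X] [ContinuousSMul G X], ∃ x : X, ∀ h ∈ H, h • x = x

/-- The union of a nonempty chain of extremely amenable subgroups of `G` (each with the
subspace topology) is extremely amenable in the subspace topology. -/
theorem extremelyAmenable_sUnion_chain
    (G : Type) [Group G] [TopologicalSpace G] [IsTopologicalGroup G]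
    (C : Set (Subgroup G)) (hne : C.Nonempty) (hchain : IsChain (· ≤ ·) C)
    (hea : ∀ K ∈ C, ExtremelyAmenable ↥K)
    (U : Subgroup G) (hU : (U : Set G) = ⋃ K ∈ C, (K : Set G)) :
    ExtremelyAmenable ↥U := by
  have hKU : ∀ K ∈ C, K ≤ U := by
    intro K hK g hg
    have : g ∈ (U : Set G) := by
      rw [hU]; exact Set.mem_biUnion hK hg
    exact this
  intro X _ _ _ _ _ _
  -- fixed point sets
  set F : C → Set X := fun K => {x : X | ∀ g : G, ∀ hg : g ∈ K.1, (⟨g, hKU K.1 K.2 hg⟩ : U) • x = x} with hF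
  have hclosed : ∀ K, IsClosed (F K) := by
    intro K
    have : F K = ⋂ (g : G) (hg : g ∈ K.1), {x : X | (⟨g, hKU K.1 K.2 hg⟩ : U) • x = x} := by
      ext x; simp [hF, Set.mem_iInter]
    rw [this]
    exact isClosed_iInter fun g => isClosed_iInter fun hg =>
      isClosed_eq (continuous_const_smul _) continuous_id
  have hcompact : ∀ K, IsCompact (F K) := fun K => (hclosed K).isCompact
  have hnonempty : ∀ K : C, (F K).Nonempty := by
    intro K
    letI : MulAction ↥K.1 X := MulAction.compHom X (Subgroup.inclusion (hKU K.1 K.2))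
    haveI : ContinuousSMul ↥K.1 X := by
      refine ⟨?_⟩
      have hinc : Continuous (fun k : ↥K.1 => (⟨(k : G), hKU K.1 K.2 k.2⟩ : U)) :=
        continuous_subtype_val.subtype_mk _
      have h2 : Continuous fun p : ↥K.1 × X =>
          (⟨((p.1 : ↥K.1) : G), hKU K.1 K.2 p.1.2⟩ : U) • p.2 :=
        (hinc.comp continuous_fst).smul continuous_snd
      exact h2
    obtain ⟨x, hx⟩ := hea K.1 K.2 X
    refine ⟨x, ?_⟩
    intro g hg
    exact hx ⟨g, hg⟩
  haveI : Nonempty C := ⟨⟨hne.choose, hne.choose_spec⟩⟩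
  have hdir : Directed (· ⊇ ·) F := by
    intro K L
    rcases hchain.total K.2 L.2 with h | h
    · refine ⟨L, ?_, fun x hx => hx⟩
      intro x hx g hg
      have := hx g (h hg)
      exact this
    · refine ⟨K, fun x hx => hx, ?_⟩
      intro x hx g hg
      exact hx g (h hg)
  obtain ⟨x, hx⟩ := IsCompact.nonempty_iInter_of_directed_nonempty_isCompact_isClosed
    F hdir hnonempty hcompact hclosed
  refine ⟨x, ?_⟩
  rintro ⟨g, hg⟩
  have : g ∈ (U : Set G) := hg
  rw [hU] at this
  obtain ⟨K, hK, hgK⟩ := Set.mem_iUnion₂.mp this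
  have hxK : x ∈ F ⟨K, hK⟩ := Set.mem_iInter.mp hx ⟨K, hK⟩
  exact hxK g hgK
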